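/- Let H be a 5-Ore graph. For any vertex v ∈ V(H), there exists a diamond or an emerald of H disjoint from v. Moreover, if H ≠ K_5, then for any subgraph T of H isomorphic to K_4, there exists a diamond or an emerald of H disjoint from T. -/

import Mathlib

open SimpleGraph

namespace Postle

noncomputable def epsC : ℝ := 1 / 21
noncomputable def delC : ℝ := 8 / 21
noncomputable def PC : ℝ := 48 / 21
noncomputable def QC : ℝ := 8 / 21

/-- The degree of a vertex, via the cardinality of its neighbor set. -/
noncomputable def degS {V : Type} (G : SimpleGraph V) (v : V) : ℕ :=
  (G.neighborSet v).ncard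

/-- A graph is 5-critical if it is not 4-colorable but every proper subgraph is. -/
def FiveCritical {V : Type} (G : SimpleGraph V) : Prop :=
  ¬ G.Colorable 4 ∧ ∀ H : SimpleGraph V, H < G → H.Colorable 4

/-- `G` is (isomorphic to) the complete graph `K₅`. -/
def IsK5 {V : Type} (G : SimpleGraph V) : Prop :=
  Nonempty (G ≃g (⊤ : SimpleGraph (Fin 5)))

/-- `T(G)`: the maximum, over collections of pairwise disjoint cliques of size 3 or 4 in `G`,
of (number of 3-cliques) + 2 * (number of 4-cliques); each clique of size `k` contributes
`k - 2`. -/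
noncomputable def TT {V : Type} (G : SimpleGraph V) : ℕ :=
  sSup { n : ℕ | ∃ C : Finset (Finset V),
    ((C : Set (Finset V)).Pairwise fun A B => Disjoint A B) ∧
    (∀ W ∈ C, G.IsClique (W : Set V) ∧ (W.card = 3 ∨ W.card = 4)) ∧
    n = ∑ W ∈ C, (W.card - 2) }

/-- The potential `p(G) = (9+ε)|V(G)| - 4|E(G)| - δ·T(G)` with `ε = 1/21`, `δ = 8/21`. -/
noncomputable def pot {V : Type} (G : SimpleGraph V) : ℝ :=
  (9 + epsC) * (Nat.card V : ℝ) - 4 * (G.edgeSet.ncard : ℝ) - delC * (TT G : ℝ)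

/-- `p_G(R) = p(G[R])`. -/
noncomputable def potOn {V : Type} (G : SimpleGraph V) (R : Set V) : ℝ :=
  pot (G.induce R)

/-- The Kostochka–Yancey potential `p_KY(G) = 9|V(G)| - 4|E(G)|`. -/
noncomputable def potKY {V : Type} (G : SimpleGraph V) : ℝ :=
  9 * (Nat.card V : ℝ) - 4 * (G.edgeSet.ncard : ℝ)

noncomputable def potKYOn {V : Type} (G : SimpleGraph V) (R : Set V) : ℝ :=
  potKY (G.induce R)

/-- `G` is an Ore-composition of `G₁` (the edge side, with replaced edge `xy`) and `G₂`
(the vertex side, with split vertex `z`): delete the edge `xy` of `G₁`, split `z` into two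
vertices of positive degree, and identify them with `x` and `y`. The set `S` records which
neighbors of `z` get attached to `x`. -/
def IsOreComposition {V V₁ V₂ : Type} (G : SimpleGraph V)
    (G₁ : SimpleGraph V₁) (G₂ : SimpleGraph V₂) : Prop :=
  ∃ (x y : V₁) (z : V₂) (f₁ : V₁ ↪ V) (f₂ : {w : V₂ // w ≠ z} ↪ V) (S : Set V₂),
    G₁.Adj x y ∧
    (∀ w ∈ S, G₂.Adj z w) ∧ S.Nonempty ∧ (G₂.neighborSet z \ S).Nonempty ∧
    Set.range ⇑f₁ ∩ Set.range ⇑f₂ = ∅ ∧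
    Set.range ⇑f₁ ∪ Set.range ⇑f₂ = Set.univ ∧
    ∀ a b : V, G.Adj a b ↔
      ((∃ a' b' : V₁, f₁ a' = a ∧ f₁ b' = b ∧ G₁.Adj a' b' ∧
          ¬(a' = x ∧ b' = y) ∧ ¬(a' = y ∧ b' = x)) ∨
       (∃ a' b' : {w : V₂ // w ≠ z}, f₂ a' = a ∧ f₂ b' = b ∧ G₂.Adj a'.1 b'.1) ∨
       (∃ w : {w : V₂ // w ≠ z}, G₂.Adj z w.1 ∧
         ((((a = f₁ x ∧ b = f₂ w) ∨ (b = f₁ x ∧ a = f₂ w)) ∧ w.1 ∈ S) ∨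
          (((a = f₁ y ∧ b = f₂ w) ∨ (b = f₁ y ∧ a = f₂ w)) ∧ w.1 ∉ S))))

/-- A graph is 5-Ore if it can be obtained from copies of `K₅` by repeated Ore-compositions. -/
inductive Is5Ore : {V : Type} → SimpleGraph V → Prop
  | k5 {V : Type} {G : SimpleGraph V} (h : IsK5 G) : Is5Ore G
  | ore {V V₁ V₂ : Type} {G : SimpleGraph V} {G₁ : SimpleGraph V₁} {G₂ : SimpleGraph V₂}
      (h₁ : Is5Ore G₁) (h₂ : Is5Ore G₂) (h : IsOreComposition G G₁ G₂) : Is5Ore G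

/-- The boundary of `R`: the vertices of `R` with a neighbor outside `R`. -/
def boundary {V : Type} (G : SimpleGraph V) (R : Set V) : Set V :=
  {v : V | v ∈ R ∧ ∃ w, w ∉ R ∧ G.Adj v w}

/-- The graph `G + uv` obtained by adding the edge `uv`. -/
noncomputable def addEdge {α : Type} (G : SimpleGraph α) (u v : α) : SimpleGraph α :=
  G ⊔ SimpleGraph.fromEdgeSet {s(u, v)}

/-- `R` is an Ore-collapsible subset of `G`: a proper subset whose boundary consists of exactly
two non-adjacent vertices `u, v` such that `G[R] + uv` is 5-Ore. -/
def OreCollapsible {V : Type} (G : SimpleGraph V) (R : Set V) : Prop :=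
  R ≠ Set.univ ∧ ∃ u v : ↥R, u.1 ≠ v.1 ∧ ¬ G.Adj u.1 v.1 ∧
    boundary G R = {u.1, v.1} ∧ Is5Ore (addEdge (G.induce R) u v)

/-- An emerald: a subgraph isomorphic to `K₄` all of whose vertices have degree 4 in `G`,
given by its vertex set. -/
def IsEmerald {V : Type} (G : SimpleGraph V) (S : Set V) : Prop :=
  S.ncard = 4 ∧ (∀ a ∈ S, ∀ b ∈ S, a ≠ b → G.Adj a b) ∧ ∀ v ∈ S, degS G v = 4

/-- A diamond: a subgraph isomorphic to `K₅ - e` in which the vertices not incident to `e`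
have degree 4 in `G`, given by its vertex set. -/
def IsDiamond {V : Type} (G : SimpleGraph V) (D : Set V) : Prop :=
  D.ncard = 5 ∧ ∃ u ∈ D, ∃ v ∈ D, u ≠ v ∧
    (∀ a ∈ D, ∀ b ∈ D, a ≠ b → ¬(a = u ∧ b = v) → ¬(a = v ∧ b = u) → G.Adj a b) ∧
    ∀ w ∈ D, w ≠ u → w ≠ v → degS G w = 4

/-- A graph is ungemmed if it contains neither a diamond nor an emerald. -/
def Ungemmed {V : Type} (G : SimpleGraph V) : Prop :=
  (¬ ∃ D : Set V, IsDiamond G D) ∧ ¬ ∃ S : Set V, IsEmerald G S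

/-- `R` is collapsible: a proper subset with `|R| ≥ 5` such that in every proper 4-coloring of
`G[R]` all boundary vertices of `R` receive the same color. -/
def Collapsible {V : Type} (G : SimpleGraph V) (R : Set V) : Prop :=
  R ≠ Set.univ ∧ 5 ≤ R.ncard ∧
    ∀ φ : (G.induce R).Coloring (Fin 4), ∀ u v : ↥R,
      u.1 ∈ boundary G R → v.1 ∈ boundary G R → φ u = φ v

/-- The critical complement of a collapsible set `R`: identify the boundary of `R` to a single
new vertex (`none`) and delete the rest of `R`. -/
noncomputable def criticalComplement {V : Type} (G : SimpleGraph V) (R : Set V) :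
    SimpleGraph (Option ↥(Rᶜ)) :=
  SimpleGraph.fromRel fun a b =>
    match a, b with
    | some w, some w' => G.Adj w.1 w'.1
    | none, some w => ∃ x ∈ boundary G R, G.Adj x w.1
    | _, _ => False

/-- The φ-identification `G_φ(R)`: vertices outside `R` together with four vertices `x_i`;
the vertices of `R` colored `i` are identified to `x_i`, and all edges `x_i x_j` are added. -/
noncomputable def phiIdent {V : Type} (G : SimpleGraph V) (R : Set V) (φ : ↥R → Fin 4) :
    SimpleGraph ((↥(Rᶜ)) ⊕ Fin 4) :=
  SimpleGraph.fromRel fun a b =>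
    match a, b with
    | Sum.inl w, Sum.inl w' => G.Adj w.1 w'.1
    | Sum.inl w, Sum.inr i => ∃ r : ↥R, φ r = i ∧ G.Adj r.1 w.1
    | Sum.inr _, Sum.inr _ => True
    | _, _ => False

/-- A critical extension of `R` in `G`: a proper 4-coloring `φ` of `G[R]` together with a
5-critical subgraph `W` of the φ-identification `G_φ(R)`, with vertex set `S`. -/
structure CriticalExtension {V : Type} (G : SimpleGraph V) (R : Set V) where
  φ : (G.induce R).Coloring (Fin 4)
  S : Set ((↥(Rᶜ)) ⊕ Fin 4)
  W : SimpleGraph ↥S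
  le : W ≤ (phiIdent G R ⇑φ).induce S
  crit : FiveCritical W

/-- The critical extension `R' = (V(W) - V(X)) ∪ R` of `R`. -/
noncomputable def CriticalExtension.verts {V : Type} {G : SimpleGraph V} {R : Set V}
    (E : CriticalExtension G R) : Set V :=
  R ∪ {v : V | ∃ h : v ∈ Rᶜ, Sum.inl (⟨v, h⟩ : ↥(Rᶜ)) ∈ E.S}

/-- The size `|X|` of the core `W ∩ X` of the extension. -/
noncomputable def CriticalExtension.coreCard {V : Type} {G : SimpleGraph V} {R : Set V}
    (E : CriticalExtension G R) : ℕ :=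
  {i : Fin 4 | Sum.inr i ∈ E.S}.ncard

/-- The graph `W - X` obtained from the extender `W` by deleting the core vertices. -/
noncomputable def CriticalExtension.WminusX {V : Type} {G : SimpleGraph V} {R : Set V}
    (E : CriticalExtension G R) :=
  E.W.induce {w : ↥E.S | w.1.isLeft = true}

/-- `f(n) = (9+ε)n - 4·C(n,2)`. -/
noncomputable def fExt (n : ℕ) : ℝ := (9 + epsC) * (n : ℝ) - 4 * ((n.choose 2 : ℕ) : ℝ)

/-- The closed neighborhood of a vertex. -/
def closedNbhd {V : Type} (G : SimpleGraph V) (v : V) : Set V :=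
  insert v (G.neighborSet v)

/-- A cluster: a maximal set of degree-four vertices with the same closed neighborhood. -/
def IsCluster {V : Type} (G : SimpleGraph V) (C : Set V) : Prop :=
  C.Nonempty ∧ (∀ v ∈ C, degS G v = 4) ∧
  (∀ u ∈ C, ∀ v ∈ C, closedNbhd G u = closedNbhd G v) ∧
  ∀ C' : Set V, C ⊆ C' → (∀ v ∈ C', degS G v = 4) →
    (∀ u ∈ C', ∀ v ∈ C', closedNbhd G u = closedNbhd G v) → C' = C

open Classical in
/-- The list of cluster sizes of `G`, in decreasing order. -/
noncomputable def clusterList {V : Type} [Fintype V] (G : SimpleGraph V) : List ℕ :=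
  ((((Finset.univ : Finset V).filter fun v => degS G v = 4).image
      fun v => (Finset.univ : Finset V).filter
        fun u => degS G u = 4 ∧ closedNbhd G u = closedNbhd G v).val.map
    Finset.card).sort (· ≤ ·) |>.reverse

/-- `H` is smaller than `G`: fewer vertices; or the same number of vertices and more edges; or
the same number of vertices and edges and `H` precedes `G` in the lexicographic ordering of
cluster sizes listed in decreasing order. -/
def Smaller {V₁ V₂ : Type} [Fintype V₁] [Fintype V₂]
    (H : SimpleGraph V₁) (G : SimpleGraph V₂) : Prop :=
  Nat.card V₁ < Nat.card V₂ ∨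
  (Nat.card V₁ = Nat.card V₂ ∧ G.edgeSet.ncard < H.edgeSet.ncard) ∨
  (Nat.card V₁ = Nat.card V₂ ∧ H.edgeSet.ncard = G.edgeSet.ncard ∧
    List.Lex (· > ·) (clusterList H) (clusterList G))

/-- A 5-critical graph `G` is good if every smaller 5-critical graph satisfies the conclusion
of the main theorem. -/
def Good {V : Type} [Fintype V] (G : SimpleGraph V) : Prop :=
  FiveCritical G ∧
    ∀ (V' : Type) [Fintype V'] (H : SimpleGraph V'), FiveCritical H → Smaller H G →
      (IsK5 H → pot H = 5 + 5 * epsC - 2 * delC) ∧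
      (Is5Ore H → ¬ IsK5 H →
        pot H ≤ 5 + (Nat.card V' : ℝ) * epsC - (2 + ((Nat.card V' : ℝ) - 1) / 4) * delC) ∧
      (¬ Is5Ore H → pot H ≤ 5 - PC)

/-- `G` is tight if it is good and `p(G) ≥ 5 - P - Q`. -/
def Tight {V : Type} [Fintype V] (G : SimpleGraph V) : Prop :=
  Good G ∧ pot G ≥ 5 - PC - QC

/-- `u, v` is an identifiable pair in a proper subset `R`: `G[R] + uv` is not 4-colorable. -/
def IdentifiablePair {V : Type} (G : SimpleGraph V) (R : Set V) (u v : ↥R) : Prop :=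
  R ≠ Set.univ ∧ ¬ (addEdge (G.induce R) u v).Colorable 4

/-! ### Auxiliary development for `stmt_7` -/

section GemDefs

variable {V : Type} {G : SimpleGraph V}

/-- A gem: a diamond or an emerald. -/
def Gem (G : SimpleGraph V) (B : Set V) : Prop := IsDiamond G B ∨ IsEmerald G B

/-- A diamond with a specified pair. -/
def DiamondPair (G : SimpleGraph V) (u v : V) (D : Set V) : Prop :=
  D.ncard = 5 ∧ u ∈ D ∧ v ∈ D ∧ u ≠ v ∧
    (∀ a ∈ D, ∀ b ∈ D, a ≠ b → ¬(a = u ∧ b = v) → ¬(a = v ∧ b = u) → G.Adj a b) ∧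
    ∀ w ∈ D, w ≠ u → w ≠ v → degS G w = 4

lemma DiamondPair.isDiamond {u v : V} {D : Set V} (h : DiamondPair G u v D) :
    IsDiamond G D :=
  ⟨h.1, u, h.2.1, v, h.2.2.1, h.2.2.2.1, h.2.2.2.2.1, h.2.2.2.2.2⟩

lemma IsDiamond.exists_pair {D : Set V} (h : IsDiamond G D) :
    ∃ u v, DiamondPair G u v D := by
  obtain ⟨h5, u, hu, v, hv, huv, ha, hd⟩ := h
  exact ⟨u, v, h5, hu, hv, huv, ha, hd⟩

/-- A gem avoiding `X` and `Y` except possibly as the pair of a diamond. -/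
def XYGem (G : SimpleGraph V) (X Y : V) (B : Set V) : Prop :=
  (IsEmerald G B ∧ X ∉ B ∧ Y ∉ B) ∨
  ∃ u v, DiamondPair G u v B ∧ (X ∈ B → X = u ∨ X = v) ∧ (Y ∈ B → Y = u ∨ Y = v)

lemma XYGem.gem {X Y : V} {B : Set V} (h : XYGem G X Y B) : Gem G B := by
  rcases h with ⟨he, _, _⟩ | ⟨u, v, hd, _, _⟩
  · exact Or.inr he
  · exact Or.inl hd.isDiamond

lemma XYGem.weaken {X Y A C : V} {B : Set V} (h : XYGem G X Y B)
    (hA : A = X ∨ A = Y ∨ A ∉ B) (hC : C = X ∨ C = Y ∨ C ∉ B) : XYGem G A C B := by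
  rcases h with ⟨he, hX, hY⟩ | ⟨u, v, hd, hXu, hYu⟩
  · refine Or.inl ⟨he, ?_, ?_⟩
    · rcases hA with rfl | rfl | hA <;> assumption
    · rcases hC with rfl | rfl | hC <;> assumption
  · refine Or.inr ⟨u, v, hd, ?_, ?_⟩
    · rcases hA with rfl | rfl | hA
      · exact hXu
      · exact hYu
      · exact fun h' => absurd h' hA
    · rcases hC with rfl | rfl | hC
      · exact hXu
      · exact hYu
      · exact fun h' => absurd h' hC

lemma Gem.xyGem {X Y : V} {B : Set V} (h : Gem G B) (hX : X ∉ B) (hY : Y ∉ B) :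
    XYGem G X Y B := by
  rcases h with hd | he
  · obtain ⟨u, v, hdp⟩ := hd.exists_pair
    exact Or.inr ⟨u, v, hdp, fun h' => absurd h' hX, fun h' => absurd h' hY⟩
  · exact Or.inl ⟨he, hX, hY⟩

/-- The statement we prove by induction on the 5-Ore structure. -/
def Psi (G : SimpleGraph V) : Prop :=
  (∀ v : V, ∃ B : Set V, Gem G B ∧ v ∉ B) ∧
  (∀ X Y : V, G.Adj X Y → ∃ B : Set V, XYGem G X Y B) ∧
  (¬ IsK5 G → ∀ T : Set V, T.ncard = 4 → (∀ a ∈ T, ∀ b ∈ T, a ≠ b → G.Adj a b) →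
    ∃ B : Set V, Gem G B ∧ Disjoint B T)

lemma finite_of_ncard_eq {α : Type} {s : Set α} {n : ℕ} (h : s.ncard = n) (hn : n ≠ 0) :
    s.Finite := by
  by_contra hf
  rw [Set.Infinite.ncard hf] at h
  exact hn h.symm

end GemDefs

section K5Facts

variable {V : Type} {G : SimpleGraph V} (e : G ≃g (⊤ : SimpleGraph (Fin 5)))

include e

lemma k5_adj (a b : V) : G.Adj a b ↔ a ≠ b := by
  rw [← e.map_adj_iff, SimpleGraph.top_adj]
  constructor
  · intro h h'; exact h (by rw [h'])
  · intro h h'; exact h (e.toEquiv.injective h')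

lemma k5_finite : Finite V := Finite.of_equiv _ e.toEquiv.symm

lemma k5_card : Nat.card V = 5 := by
  rw [Nat.card_congr e.toEquiv, Nat.card_eq_fintype_card, Fintype.card_fin]

lemma k5_nbhd (v : V) : G.neighborSet v = {v}ᶜ := by
  ext w
  simp only [SimpleGraph.mem_neighborSet, Set.mem_compl_iff, Set.mem_singleton_iff,
    k5_adj e]
  exact ⟨fun h h' => h h'.symm, fun h h' => h h'.symm⟩

lemma k5_compl_singleton_ncard (v : V) : ({v}ᶜ : Set V).ncard = 4 := by
  have : Finite V := k5_finite e
  rw [Set.compl_eq_univ_diff, Set.ncard_diff_singleton_of_mem (Set.mem_univ v),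
    Set.ncard_univ, k5_card e]

lemma k5_deg (v : V) : degS G v = 4 := by
  rw [degS, k5_nbhd e, k5_compl_singleton_ncard e]

omit e in
lemma psi_k5 {V : Type} {G : SimpleGraph V} (h : IsK5 G) : Psi G := by
  obtain ⟨e⟩ := h
  refine ⟨?_, ?_, fun hn => absurd ⟨e⟩ hn⟩
  · intro v
    refine ⟨{v}ᶜ, Or.inr ⟨k5_compl_singleton_ncard e v, ?_, ?_⟩, by simp⟩
    · intro a _ b _ hab
      exact (k5_adj e a b).mpr hab
    · intro w _
      exact k5_deg e w
  · intro X Y hXY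
    refine ⟨Set.univ, Or.inr ⟨X, Y, ⟨?_, trivial, trivial, hXY.ne, ?_, ?_⟩,
      fun _ => Or.inl rfl, fun _ => Or.inr rfl⟩⟩
    · rw [Set.ncard_univ, k5_card e]
    · intro a _ b _ hab _ _
      exact (k5_adj e a b).mpr hab
    · intro w _ _ _
      exact k5_deg e w

end K5Facts

section Comp

/-- Destructured witnesses of an Ore composition. -/
structure OreData {V V₁ V₂ : Type} (H : SimpleGraph V) (G₁ : SimpleGraph V₁)
    (G₂ : SimpleGraph V₂) (x y : V₁) (z : V₂) (f₁ : V₁ ↪ V)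
    (f₂ : {w : V₂ // w ≠ z} ↪ V) (S : Set V₂) : Prop where
  hxy : G₁.Adj x y
  hS : ∀ w ∈ S, G₂.Adj z w
  hSne : S.Nonempty
  hSc : (G₂.neighborSet z \ S).Nonempty
  hdisj : Set.range ⇑f₁ ∩ Set.range ⇑f₂ = ∅
  hcover : Set.range ⇑f₁ ∪ Set.range ⇑f₂ = Set.univ
  hadj : ∀ a b : V, H.Adj a b ↔
      ((∃ a' b' : V₁, f₁ a' = a ∧ f₁ b' = b ∧ G₁.Adj a' b' ∧
          ¬(a' = x ∧ b' = y) ∧ ¬(a' = y ∧ b' = x)) ∨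
       (∃ a' b' : {w : V₂ // w ≠ z}, f₂ a' = a ∧ f₂ b' = b ∧ G₂.Adj a'.1 b'.1) ∨
       (∃ w : {w : V₂ // w ≠ z}, G₂.Adj z w.1 ∧
         ((((a = f₁ x ∧ b = f₂ w) ∨ (b = f₁ x ∧ a = f₂ w)) ∧ w.1 ∈ S) ∨
          (((a = f₁ y ∧ b = f₂ w) ∨ (b = f₁ y ∧ a = f₂ w)) ∧ w.1 ∉ S))))

variable {V V₁ V₂ : Type} {H : SimpleGraph V} {G₁ : SimpleGraph V₁} {G₂ : SimpleGraph V₂}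
  {x y : V₁} {z : V₂} {f₁ : V₁ ↪ V} {f₂ : {w : V₂ // w ≠ z} ↪ V} {S : Set V₂}

namespace OreData

variable (W : OreData H G₁ G₂ x y z f₁ f₂ S)

include W

lemma ne12 (a : V₁) (u : {w : V₂ // w ≠ z}) : f₁ a ≠ f₂ u := by
  intro h
  have : f₁ a ∈ Set.range ⇑f₁ ∩ Set.range ⇑f₂ := ⟨⟨a, rfl⟩, ⟨u, h.symm⟩⟩
  rw [W.hdisj] at this
  exact this

lemma mem_cases (v : V) : (∃ a, f₁ a = v) ∨ (∃ u, f₂ u = v) := by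
  have : v ∈ Set.range ⇑f₁ ∪ Set.range ⇑f₂ := W.hcover ▸ Set.mem_univ v
  exact this

lemma adj11 (a b : V₁) : H.Adj (f₁ a) (f₁ b) ↔
    (G₁.Adj a b ∧ ¬(a = x ∧ b = y) ∧ ¬(a = y ∧ b = x)) := by
  rw [W.hadj]
  constructor
  · rintro (⟨a', b', ha, hb, hab, h1, h2⟩ | ⟨a', b', ha, hb, _⟩ |
      ⟨w, _, (⟨(⟨h1, h2⟩ | ⟨h1, h2⟩), _⟩ | ⟨(⟨h1, h2⟩ | ⟨h1, h2⟩), _⟩)⟩)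
    · obtain rfl := f₁.injective ha
      obtain rfl := f₁.injective hb
      exact ⟨hab, h1, h2⟩
    · exact absurd ha.symm (W.ne12 a a')
    · exact absurd h2 (W.ne12 b w)
    · exact absurd h2 (W.ne12 a w)
    · exact absurd h2 (W.ne12 b w)
    · exact absurd h2 (W.ne12 a w)
  · rintro ⟨hab, h1, h2⟩
    exact Or.inl ⟨a, b, rfl, rfl, hab, h1, h2⟩

lemma adj22 (u u' : {w : V₂ // w ≠ z}) : H.Adj (f₂ u) (f₂ u') ↔ G₂.Adj u.1 u'.1 := by
  rw [W.hadj]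
  constructor
  · rintro (⟨a', b', ha, hb, _⟩ | ⟨a', b', ha, hb, hab⟩ |
      ⟨w, _, (⟨(⟨h1, h2⟩ | ⟨h1, h2⟩), _⟩ | ⟨(⟨h1, h2⟩ | ⟨h1, h2⟩), _⟩)⟩)
    · exact absurd ha (W.ne12 a' u)
    · obtain rfl := f₂.injective ha
      obtain rfl := f₂.injective hb
      exact hab
    · exact absurd h1.symm (W.ne12 x u)
    · exact absurd h1.symm (W.ne12 x u')
    · exact absurd h1.symm (W.ne12 y u)
    · exact absurd h1.symm (W.ne12 y u')
  · intro h
    exact Or.inr (Or.inl ⟨u, u', rfl, rfl, h⟩)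

lemma adjx2 (u : {w : V₂ // w ≠ z}) :
    H.Adj (f₁ x) (f₂ u) ↔ (G₂.Adj z u.1 ∧ u.1 ∈ S) := by
  rw [W.hadj]
  constructor
  · rintro (⟨a', b', ha, hb, _⟩ | ⟨a', b', ha, hb, _⟩ |
      ⟨w, hzw, (⟨(⟨h1, h2⟩ | ⟨h1, h2⟩), hmem⟩ | ⟨(⟨h1, h2⟩ | ⟨h1, h2⟩), hmem⟩)⟩)
    · exact absurd hb (W.ne12 b' u)
    · exact absurd ha.symm (W.ne12 x a')
    · obtain rfl := f₂.injective h2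
      exact ⟨hzw, hmem⟩
    · exact absurd h1 (W.ne12 x u).symm
    · exact absurd (f₁.injective h1) W.hxy.ne
    · exact absurd h1 (W.ne12 y u).symm
  · rintro ⟨h1, h2⟩
    exact Or.inr (Or.inr ⟨u, h1, Or.inl ⟨Or.inl ⟨rfl, rfl⟩, h2⟩⟩)

lemma adjy2 (u : {w : V₂ // w ≠ z}) :
    H.Adj (f₁ y) (f₂ u) ↔ (G₂.Adj z u.1 ∧ u.1 ∉ S) := by
  rw [W.hadj]
  constructor
  · rintro (⟨a', b', ha, hb, _⟩ | ⟨a', b', ha, hb, _⟩ |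
      ⟨w, hzw, (⟨(⟨h1, h2⟩ | ⟨h1, h2⟩), hmem⟩ | ⟨(⟨h1, h2⟩ | ⟨h1, h2⟩), hmem⟩)⟩)
    · exact absurd hb (W.ne12 b' u)
    · exact absurd ha.symm (W.ne12 y a')
    · exact absurd (f₁.injective h1) W.hxy.ne'
    · exact absurd h1 (W.ne12 x u).symm
    · obtain rfl := f₂.injective h2
      exact ⟨hzw, hmem⟩
    · exact absurd h1 (W.ne12 y u).symm
  · rintro ⟨h1, h2⟩
    exact Or.inr (Or.inr ⟨u, h1, Or.inr ⟨Or.inl ⟨rfl, rfl⟩, h2⟩⟩)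

lemma adj12 {a : V₁} (hax : a ≠ x) (hay : a ≠ y) (u : {w : V₂ // w ≠ z}) :
    ¬ H.Adj (f₁ a) (f₂ u) := by
  rw [W.hadj]
  rintro (⟨a', b', ha, hb, _⟩ | ⟨a', b', ha, hb, _⟩ |
    ⟨w, hzw, (⟨(⟨h1, h2⟩ | ⟨h1, h2⟩), hmem⟩ | ⟨(⟨h1, h2⟩ | ⟨h1, h2⟩), hmem⟩)⟩)
  · exact absurd hb (W.ne12 b' u)
  · exact absurd ha.symm (W.ne12 a a')
  · exact hax (f₁.injective h1)
  · exact absurd h1 (W.ne12 x u).symm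
  · exact hay (f₁.injective h1)
  · exact absurd h1 (W.ne12 y u).symm

lemma not_adj_xy : ¬ H.Adj (f₁ x) (f₁ y) := by
  rw [W.adj11]
  rintro ⟨_, h, _⟩
  exact h ⟨rfl, rfl⟩

lemma nbhd1 {a : V₁} (hax : a ≠ x) (hay : a ≠ y) :
    H.neighborSet (f₁ a) = ⇑f₁ '' G₁.neighborSet a := by
  ext t
  simp only [SimpleGraph.mem_neighborSet, Set.mem_image]
  constructor
  · intro ht
    rcases W.mem_cases t with ⟨b, rfl⟩ | ⟨u, rfl⟩
    · exact ⟨b, ((W.adj11 a b).mp ht).1, rfl⟩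
    · exact absurd ht (W.adj12 hax hay u)
  · rintro ⟨b, hb, rfl⟩
    exact (W.adj11 a b).mpr ⟨hb, fun h => hax h.1, fun h => hay h.1⟩

lemma deg1 {a : V₁} (hax : a ≠ x) (hay : a ≠ y) : degS H (f₁ a) = degS G₁ a := by
  rw [degS, degS, W.nbhd1 hax hay, Set.ncard_image_of_injective _ f₁.injective]

lemma deg2 (u : {w : V₂ // w ≠ z}) : degS H (f₂ u) = degS G₂ u.1 := by
  classical
  set g : V₂ → V := fun b => if h : b = z then (if u.1 ∈ S then f₁ x else f₁ y)
    else f₂ ⟨b, h⟩ with hg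
  have himg : g '' G₂.neighborSet u.1 = H.neighborSet (f₂ u) := by
    ext t
    simp only [Set.mem_image, SimpleGraph.mem_neighborSet]
    constructor
    · rintro ⟨b, hb, rfl⟩
      by_cases hbz : b = z
      · subst hbz
        by_cases hSu : u.1 ∈ S
        · simpa [hg, hSu] using ((W.adjx2 u).mpr ⟨hb.symm, hSu⟩).symm
        · simpa [hg, hSu] using ((W.adjy2 u).mpr ⟨hb.symm, hSu⟩).symm
      · simpa [hg, hbz] using (W.adj22 u ⟨b, hbz⟩).mpr hb
    · intro ht
      rcases W.mem_cases t with ⟨b, rfl⟩ | ⟨u', rfl⟩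
      · by_cases hbx : b = x
        · subst hbx
          obtain ⟨hz, hSu⟩ := (W.adjx2 u).mp ht.symm
          exact ⟨z, hz.symm, by simp [hg, hSu]⟩
        · by_cases hby : b = y
          · subst hby
            obtain ⟨hz, hSu⟩ := (W.adjy2 u).mp ht.symm
            exact ⟨z, hz.symm, by simp [hg, hSu]⟩
          · exact absurd ht.symm (W.adj12 hbx hby u)
      · have hadj' := (W.adj22 u u').mp ht
        exact ⟨u'.1, hadj', by simp [hg, u'.2]⟩
  have hinj : Set.InjOn g (G₂.neighborSet u.1) := by
    intro b hb b' hb' heq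
    by_cases hbz : b = z <;> by_cases hbz' : b' = z
    · rw [hbz, hbz']
    · exfalso
      simp only [hg, hbz, hbz', dif_pos, dif_neg, not_false_iff] at heq
      by_cases hSu : u.1 ∈ S
      · rw [if_pos hSu] at heq
        exact W.ne12 x ⟨b', hbz'⟩ heq
      · rw [if_neg hSu] at heq
        exact W.ne12 y ⟨b', hbz'⟩ heq
    · exfalso
      simp only [hg, hbz, hbz', dif_pos, dif_neg, not_false_iff] at heq
      by_cases hSu : u.1 ∈ S
      · rw [if_pos hSu] at heq
        exact W.ne12 x ⟨b, hbz⟩ heq.symm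
      · rw [if_neg hSu] at heq
        exact W.ne12 y ⟨b, hbz⟩ heq.symm
    · simp only [hg, hbz, hbz', dif_neg, not_false_iff] at heq
      have := f₂.injective heq
      exact congrArg Subtype.val this
  rw [degS, degS, ← himg, Set.ncard_image_of_injOn hinj]

lemma degy (w₀ : V₂) (hw : ∀ u : V₂, (G₂.Adj z u ∧ u ∉ S) ↔ u = w₀) :
    degS H (f₁ y) = degS G₁ y := by
  classical
  have hz0 : G₂.Adj z w₀ ∧ w₀ ∉ S := (hw w₀).mpr rfl
  have hw0ne : w₀ ≠ z := hz0.1.ne'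
  set g : V₁ → V := fun a => if a = x then f₂ ⟨w₀, hw0ne⟩ else f₁ a with hg
  have himg : g '' G₁.neighborSet y = H.neighborSet (f₁ y) := by
    ext t
    simp only [Set.mem_image, SimpleGraph.mem_neighborSet]
    constructor
    · rintro ⟨a, ha, rfl⟩
      by_cases hax : a = x
      · simpa [hg, hax] using (W.adjy2 ⟨w₀, hw0ne⟩).mpr ⟨hz0.1, hz0.2⟩
      · simpa [hg, hax] using (W.adj11 y a).mpr
          ⟨ha, fun h => W.hxy.ne h.1.symm, fun h => hax h.2⟩
    · intro ht
      rcases W.mem_cases t with ⟨b, rfl⟩ | ⟨u, rfl⟩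
      · obtain ⟨hyb, _, h2⟩ := (W.adj11 y b).mp ht
        have hbx : b ≠ x := fun h => h2 ⟨rfl, h⟩
        exact ⟨b, hyb, by simp [hg, hbx]⟩
      · obtain ⟨hzu, hus⟩ := (W.adjy2 u).mp ht
        have hu : u = ⟨w₀, hw0ne⟩ := Subtype.ext ((hw u.1).mp ⟨hzu, hus⟩)
        exact ⟨x, W.hxy.symm, by simp [hg, hu]⟩
  have hinj : Set.InjOn g (G₁.neighborSet y) := by
    intro a ha a' ha' heq
    by_cases hax : a = x <;> by_cases hax' : a' = x
    · rw [hax, hax']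
    · exfalso
      simp only [hg, hax, hax', if_pos, if_neg, not_false_iff] at heq
      exact W.ne12 a' ⟨w₀, hw0ne⟩ heq.symm
    · exfalso
      simp only [hg, hax, hax', if_pos, if_neg, not_false_iff] at heq
      exact W.ne12 a ⟨w₀, hw0ne⟩ heq
    · simp only [hg, hax, hax', if_neg, not_false_iff] at heq
      exact f₁.injective heq
  rw [degS, degS, ← himg, Set.ncard_image_of_injOn hinj]

lemma swap : OreData H G₁ G₂ y x z f₁ f₂ (G₂.neighborSet z \ S) := by
  refine ⟨W.hxy.symm, fun w hw => hw.1, W.hSc, ?_, W.hdisj, W.hcover, ?_⟩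
  · obtain ⟨s, hs⟩ := W.hSne
    exact ⟨s, W.hS s hs, fun h => h.2 hs⟩
  · intro a b
    rw [W.hadj a b]
    constructor
    · rintro (⟨a', b', ha, hb, hab, h1, h2⟩ | h | ⟨w, hzw, (⟨hx', hmem⟩ | ⟨hy', hmem⟩)⟩)
      · exact Or.inl ⟨a', b', ha, hb, hab, h2, h1⟩
      · exact Or.inr (Or.inl h)
      · exact Or.inr (Or.inr ⟨w, hzw, Or.inr ⟨hx', fun h => h.2 hmem⟩⟩)
      · exact Or.inr (Or.inr ⟨w, hzw, Or.inl ⟨hy', ⟨hzw, hmem⟩⟩⟩)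
    · rintro (⟨a', b', ha, hb, hab, h1, h2⟩ | h | ⟨w, hzw, (⟨hy', hmem⟩ | ⟨hx', hmem⟩)⟩)
      · exact Or.inl ⟨a', b', ha, hb, hab, h2, h1⟩
      · exact Or.inr (Or.inl h)
      · exact Or.inr (Or.inr ⟨w, hzw, Or.inr ⟨hy', hmem.2⟩⟩)
      · refine Or.inr (Or.inr ⟨w, hzw, Or.inl ⟨hx', ?_⟩⟩)
        by_contra hns
        exact hmem ⟨hzw, hns⟩

lemma transfer2 (B₂ : Set V₂) (hgem : Gem G₂ B₂) (hz : z ∉ B₂) :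
    ∃ B : Set V, Gem H B ∧ ∀ t ∈ B, ∃ u : {w : V₂ // w ≠ z}, u.1 ∈ B₂ ∧ f₂ u = t := by
  classical
  set B₂' : Set {w : V₂ // w ≠ z} := {u | u.1 ∈ B₂} with hB₂'
  refine ⟨⇑f₂ '' B₂', ?_, by rintro t ⟨u, hu, rfl⟩; exact ⟨u, hu, rfl⟩⟩
  have hval : Subtype.val '' B₂' = B₂ := by
    ext b
    constructor
    · rintro ⟨u, hu, rfl⟩; exact hu
    · intro hb; exact ⟨⟨b, fun h => hz (h ▸ hb)⟩, hb, rfl⟩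
  have hcard : (⇑f₂ '' B₂').ncard = B₂.ncard := by
    rw [Set.ncard_image_of_injective _ f₂.injective, ← hval,
      Set.ncard_image_of_injective _ Subtype.val_injective]
  have hne' : ∀ (p q : {w : V₂ // w ≠ z}), f₂ p ≠ f₂ q → p.1 ≠ q.1 :=
    fun p q h h' => h (congrArg f₂ (Subtype.ext h'))
  rcases hgem with hd | he
  · obtain ⟨u, v, h5, hu, hv, huv, hadjD, hdegD⟩ := hd.exists_pair
    refine Or.inl ⟨hcard.trans h5, f₂ ⟨u, fun h => hz (h ▸ hu)⟩, ⟨⟨u, _⟩, hu, rfl⟩,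
      f₂ ⟨v, fun h => hz (h ▸ hv)⟩, ⟨⟨v, _⟩, hv, rfl⟩,
      fun h => huv (congrArg Subtype.val (f₂.injective h)), ?_, ?_⟩
    · rintro a ⟨p, hp, rfl⟩ b ⟨q, hq, rfl⟩ hab h1 h2
      refine (W.adj22 p q).mpr (hadjD p.1 hp q.1 hq (hne' p q hab) ?_ ?_)
      · intro hh
        exact h1 ⟨congrArg f₂ (Subtype.ext hh.1), congrArg f₂ (Subtype.ext hh.2)⟩
      · intro hh
        exact h2 ⟨congrArg f₂ (Subtype.ext hh.1), congrArg f₂ (Subtype.ext hh.2)⟩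
    · rintro t ⟨p, hp, rfl⟩ h1 h2
      rw [W.deg2 p]
      exact hdegD p.1 hp (fun h => h1 (congrArg f₂ (Subtype.ext h)))
        (fun h => h2 (congrArg f₂ (Subtype.ext h)))
  · obtain ⟨h4, hcl, hdeg⟩ := he
    refine Or.inr ⟨hcard.trans h4, ?_, ?_⟩
    · rintro a ⟨p, hp, rfl⟩ b ⟨q, hq, rfl⟩ hab
      exact (W.adj22 p q).mpr (hcl p.1 hp q.1 hq (hne' p q hab))
    · rintro t ⟨p, hp, rfl⟩
      rw [W.deg2 p]
      exact hdeg p.1 hp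

lemma transfer1 (B₁ : Set V₁) (hgem : XYGem G₁ x y B₁) :
    ∃ B : Set V, XYGem H (f₁ x) (f₁ y) B ∧ ∀ t ∈ B, ∃ a ∈ B₁, f₁ a = t := by
  refine ⟨⇑f₁ '' B₁, ?_, by rintro t ⟨a, ha, rfl⟩; exact ⟨a, ha, rfl⟩⟩
  have hcard := Set.ncard_image_of_injective B₁ f₁.injective
  rcases hgem with ⟨⟨h4, hcl, hdeg⟩, hX, hY⟩ |
    ⟨u, v, ⟨h5, hu, hv, huv, hadjD, hdegD⟩, hXu, hYv⟩
  · refine Or.inl ⟨⟨hcard.trans h4, ?_, ?_⟩, ?_, ?_⟩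
    · rintro a ⟨p, hp, rfl⟩ b ⟨q, hq, rfl⟩ hab
      have hpq : p ≠ q := fun h => hab (congrArg f₁ h)
      exact (W.adj11 p q).mpr ⟨hcl p hp q hq hpq, fun h => hX (h.1 ▸ hp),
        fun h => hY (h.1 ▸ hp)⟩
    · rintro t ⟨p, hp, rfl⟩
      rw [W.deg1 (fun h => hX (h ▸ hp)) (fun h => hY (h ▸ hp))]
      exact hdeg p hp
    · rintro ⟨p, hp, heq⟩
      exact hX (f₁.injective heq ▸ hp)
    · rintro ⟨p, hp, heq⟩
      exact hY (f₁.injective heq ▸ hp)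
  · refine Or.inr ⟨f₁ u, f₁ v, ⟨hcard.trans h5, ⟨u, hu, rfl⟩, ⟨v, hv, rfl⟩,
      fun h => huv (f₁.injective h), ?_, ?_⟩, ?_, ?_⟩
    · rintro a ⟨p, hp, rfl⟩ b ⟨q, hq, rfl⟩ hab h1 h2
      have hpq : p ≠ q := fun h => hab (congrArg f₁ h)
      have hn1 : ¬(p = u ∧ q = v) := fun h => h1 ⟨congrArg f₁ h.1, congrArg f₁ h.2⟩
      have hn2 : ¬(p = v ∧ q = u) := fun h => h2 ⟨congrArg f₁ h.1, congrArg f₁ h.2⟩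
      refine (W.adj11 p q).mpr ⟨hadjD p hp q hq hpq hn1 hn2, ?_, ?_⟩
      · rintro ⟨rfl, rfl⟩
        rcases hXu hp with h1' | h1' <;> rcases hYv hq with h2' | h2'
        · exact W.hxy.ne (h1'.trans h2'.symm)
        · exact hn1 ⟨h1', h2'⟩
        · exact hn2 ⟨h1', h2'⟩
        · exact W.hxy.ne (h1'.trans h2'.symm)
      · rintro ⟨rfl, rfl⟩
        rcases hXu hq with h1' | h1' <;> rcases hYv hp with h2' | h2'
        · exact W.hxy.ne (h1'.trans h2'.symm)
        · exact hn2 ⟨h2', h1'⟩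
        · exact hn1 ⟨h2', h1'⟩
        · exact W.hxy.ne (h1'.trans h2'.symm)
    · rintro t ⟨p, hp, rfl⟩ h1 h2
      have hpu : p ≠ u := fun h => h1 (congrArg f₁ h)
      have hpv : p ≠ v := fun h => h2 (congrArg f₁ h)
      have hpx : p ≠ x := by
        intro h
        subst h
        rcases hXu hp with h' | h'
        · exact hpu h'
        · exact hpv h'
      have hpy : p ≠ y := by
        intro h
        subst h
        rcases hYv hp with h' | h'
        · exact hpu h'
        · exact hpv h'
      rw [W.deg1 hpx hpy]
      exact hdegD p hp hpu hpv
    · rintro ⟨p, hp, heq⟩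
      obtain rfl := f₁.injective heq
      rcases hXu hp with h' | h'
      · exact Or.inl (congrArg f₁ h')
      · exact Or.inr (congrArg f₁ h')
    · rintro ⟨p, hp, heq⟩
      obtain rfl := f₁.injective heq
      rcases hYv hp with h' | h'
      · exact Or.inl (congrArg f₁ h')
      · exact Or.inr (congrArg f₁ h')

lemma transfer1' (B₁ : Set V₁) (hgem : Gem G₁ B₁) (hxB : x ∉ B₁) (w₀ : V₂)
    (hw : ∀ u : V₂, (G₂.Adj z u ∧ u ∉ S) ↔ u = w₀) :
    ∃ B : Set V, Gem H B ∧ ∀ t ∈ B, ∃ a ∈ B₁, f₁ a = t := by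
  refine ⟨⇑f₁ '' B₁, ?_, by rintro t ⟨a, ha, rfl⟩; exact ⟨a, ha, rfl⟩⟩
  have hcard := Set.ncard_image_of_injective B₁ f₁.injective
  have hdegall : ∀ p ∈ B₁, degS G₁ p = 4 → degS H (f₁ p) = 4 := by
    intro p hp hdp
    by_cases hpy : p = y
    · subst hpy
      rw [W.degy w₀ hw]
      exact hdp
    · rw [W.deg1 (fun h => hxB (h ▸ hp)) hpy]
      exact hdp
  have hadjall : ∀ p ∈ B₁, ∀ q ∈ B₁, G₁.Adj p q → H.Adj (f₁ p) (f₁ q) := by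
    intro p hp q hq h
    exact (W.adj11 p q).mpr ⟨h, fun h' => hxB (h'.1 ▸ hp), fun h' => hxB (h'.2 ▸ hq)⟩
  rcases hgem with hd | he
  · obtain ⟨u, v, h5, hu, hv, huv, hadjD, hdegD⟩ := hd.exists_pair
    refine Or.inl ⟨hcard.trans h5, f₁ u, ⟨u, hu, rfl⟩, f₁ v, ⟨v, hv, rfl⟩,
      fun h => huv (f₁.injective h), ?_, ?_⟩
    · rintro a ⟨p, hp, rfl⟩ b ⟨q, hq, rfl⟩ hab h1 h2
      exact hadjall p hp q hq (hadjD p hp q hq (fun h => hab (congrArg f₁ h))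
        (fun h => h1 ⟨congrArg f₁ h.1, congrArg f₁ h.2⟩)
        (fun h => h2 ⟨congrArg f₁ h.1, congrArg f₁ h.2⟩))
    · rintro t ⟨p, hp, rfl⟩ h1 h2
      exact hdegall p hp (hdegD p hp (fun h => h1 (congrArg f₁ h))
        (fun h => h2 (congrArg f₁ h)))
  · obtain ⟨h4, hcl, hdeg⟩ := he
    refine Or.inr ⟨hcard.trans h4, ?_, ?_⟩
    · rintro a ⟨p, hp, rfl⟩ b ⟨q, hq, rfl⟩ hab
      exact hadjall p hp q hq (hcl p hp q hq (fun h => hab (congrArg f₁ h)))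
    · rintro t ⟨p, hp, rfl⟩
      exact hdegall p hp (hdeg p hp)

lemma mixed (ih1 : ∀ v : V₁, ∃ B : Set V₁, Gem G₁ B ∧ v ∉ B)
    (ih2 : ¬ IsK5 G₂ → ∀ T₂ : Set V₂, T₂.ncard = 4 →
      (∀ a ∈ T₂, ∀ b ∈ T₂, a ≠ b → G₂.Adj a b) →
      ∃ B : Set V₂, Gem G₂ B ∧ Disjoint B T₂)
    (T : Set V) (hT4 : T.ncard = 4) (hTcl : ∀ a ∈ T, ∀ b ∈ T, a ≠ b → H.Adj a b)
    (hxT : f₁ x ∈ T) (hmix : ∀ t ∈ T, t = f₁ x ∨ ∃ u : {w : V₂ // w ≠ z}, f₂ u = t) :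
    ∃ B : Set V, Gem H B ∧ Disjoint B T := by
  classical
  set T₂' : Set {w : V₂ // w ≠ z} := {u | f₂ u ∈ T} with hT₂'
  have himg2 : ⇑f₂ '' T₂' = T \ {f₁ x} := by
    ext t
    constructor
    · rintro ⟨u, hu, rfl⟩
      exact ⟨hu, fun h => W.ne12 x u (Set.mem_singleton_iff.mp h).symm⟩
    · rintro ⟨ht, hne⟩
      rcases hmix t ht with rfl | ⟨u, rfl⟩
      · exact absurd rfl hne
      · exact ⟨u, ht, rfl⟩
  have hTfin : T.Finite := finite_of_ncard_eq hT4 (by norm_num)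
  have hc3 : (⇑f₂ '' T₂').ncard = 3 := by
    rw [himg2, Set.ncard_diff_singleton_of_mem hxT, hT4]
  have hc3' : (Subtype.val '' T₂').ncard = 3 := by
    rw [Set.ncard_image_of_injective _ Subtype.val_injective,
      ← Set.ncard_image_of_injective T₂' f₂.injective, hc3]
  have hfin' : (Subtype.val '' T₂').Finite := finite_of_ncard_eq hc3' (by norm_num)
  have hzT : z ∉ Subtype.val '' T₂' := by
    rintro ⟨u, _, h⟩
    exact u.2 h
  have hsubS : ∀ u : {w : V₂ // w ≠ z}, u ∈ T₂' → (G₂.Adj z u.1 ∧ u.1 ∈ S) := by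
    intro u hu
    exact (W.adjx2 u).mp (hTcl _ hxT _ hu (W.ne12 x u))
  by_cases hk : IsK5 G₂
  · obtain ⟨e⟩ := hk
    have hfinV₂ : Finite V₂ := k5_finite e
    have hsub : Subtype.val '' T₂' ⊆ ({z}ᶜ : Set V₂) := by
      rintro b ⟨u, _, rfl⟩
      exact u.2
    have hdiffcard : (({z}ᶜ : Set V₂) \ Subtype.val '' T₂').ncard = 1 := by
      rw [Set.ncard_diff hsub hfin', hc3', k5_compl_singleton_ncard e]
    obtain ⟨w₀, hw₀⟩ := Set.ncard_eq_one.mp hdiffcard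
    have hw : ∀ u : V₂, (G₂.Adj z u ∧ u ∉ S) ↔ u = w₀ := by
      intro u
      constructor
      · rintro ⟨hzu, hus⟩
        have h1 : u ∈ ({z}ᶜ : Set V₂) := hzu.ne'
        have h2 : u ∉ Subtype.val '' T₂' := by
          rintro ⟨u1, hu1, rfl⟩
          exact hus (hsubS u1 hu1).2
        have hmem : u ∈ ({z}ᶜ : Set V₂) \ Subtype.val '' T₂' := ⟨h1, h2⟩
        rw [hw₀] at hmem
        exact hmem
      · intro hueq
        have hmem : u ∈ ({z}ᶜ : Set V₂) \ Subtype.val '' T₂' := by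
          rw [hw₀]
          exact hueq
        refine ⟨(k5_adj e z u).mpr (Ne.symm hmem.1), ?_⟩
        intro huS
        obtain ⟨s, hsN, hsS⟩ := W.hSc
        have hs0 : G₂.Adj z s := hsN
        have hs2 : s ∉ Subtype.val '' T₂' := by
          rintro ⟨u1, hu1, rfl⟩
          exact hsS (hsubS u1 hu1).2
        have hsw : s = w₀ := by
          have h' : s ∈ ({z}ᶜ : Set V₂) \ Subtype.val '' T₂' := ⟨hs0.ne', hs2⟩
          rw [hw₀] at h'
          exact h'
        refine hsS ?_
        rw [hsw, ← hueq]
        exact huS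
    obtain ⟨B₁, hgem₁, hxB₁⟩ := ih1 x
    obtain ⟨B, hgemB, hmem⟩ := W.transfer1' B₁ hgem₁ hxB₁ w₀ hw
    refine ⟨B, hgemB, Set.disjoint_left.mpr ?_⟩
    intro t htB htT
    obtain ⟨a, haB, rfl⟩ := hmem t htB
    rcases hmix _ htT with heq | ⟨u, hu⟩
    · exact hxB₁ (f₁.injective heq ▸ haB)
    · exact W.ne12 a u hu.symm
  · set T₂ : Set V₂ := insert z (Subtype.val '' T₂') with hT₂
    have hT₂4 : T₂.ncard = 4 := by
      rw [hT₂, Set.ncard_insert_of_notMem hzT hfin', hc3']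
    have hT₂cl : ∀ a ∈ T₂, ∀ b ∈ T₂, a ≠ b → G₂.Adj a b := by
      intro a ha b hb hab
      rcases Set.mem_insert_iff.mp ha with rfl | ⟨u, hu, rfl⟩ <;>
        rcases Set.mem_insert_iff.mp hb with rfl | ⟨u', hu', rfl⟩
      · exact absurd rfl hab
      · exact (hsubS u' hu').1
      · exact ((hsubS u hu).1).symm
      · have hne2 : f₂ u ≠ f₂ u' := fun h => hab (congrArg Subtype.val (f₂.injective h))
        exact (W.adj22 u u').mp (hTcl _ hu _ hu' hne2)
    obtain ⟨B₂, hgem₂, hdisj₂⟩ := ih2 hk T₂ hT₂4 hT₂cl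
    have hzB₂ : z ∉ B₂ := fun h => (Set.disjoint_left.mp hdisj₂ h) (Set.mem_insert z _)
    obtain ⟨B, hgemB, hmem⟩ := W.transfer2 B₂ hgem₂ hzB₂
    refine ⟨B, hgemB, Set.disjoint_left.mpr ?_⟩
    intro t htB htT
    obtain ⟨u, huB, rfl⟩ := hmem t htB
    have hu' : u ∈ T₂' := htT
    exact (Set.disjoint_left.mp hdisj₂ huB) (Set.mem_insert_iff.mpr (Or.inr ⟨u, hu', rfl⟩))

end OreData

lemma psi_step {V V₁ V₂ : Type} {H : SimpleGraph V} {G₁ : SimpleGraph V₁}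
    {G₂ : SimpleGraph V₂} (h : IsOreComposition H G₁ G₂)
    (ih₁ : Psi G₁) (ih₂ : Psi G₂) : Psi H := by
  obtain ⟨x, y, z, f₁, f₂, S, h1, h2, h3, h4, h5, h6, h7⟩ := h
  have W : OreData H G₁ G₂ x y z f₁ f₂ S := ⟨h1, h2, h3, h4, h5, h6, h7⟩
  refine ⟨?_, ?_, ?_⟩
  · intro v
    rcases W.mem_cases v with ⟨a, rfl⟩ | ⟨u, rfl⟩
    · obtain ⟨B₂, hg, hz⟩ := ih₂.1 z
      obtain ⟨B, hgB, hmem⟩ := W.transfer2 B₂ hg hz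
      refine ⟨B, hgB, fun hv => ?_⟩
      obtain ⟨u, _, he⟩ := hmem _ hv
      exact W.ne12 a u he.symm
    · obtain ⟨B₁, hg⟩ := ih₁.2.1 x y W.hxy
      obtain ⟨B, hgB, hmem⟩ := W.transfer1 B₁ hg
      refine ⟨B, hgB.gem, fun hv => ?_⟩
      obtain ⟨a, _, he⟩ := hmem _ hv
      exact W.ne12 a u he
  · intro A C hAC
    rcases W.mem_cases A with ⟨a, rfl⟩ | ⟨p, rfl⟩ <;>
      rcases W.mem_cases C with ⟨b, rfl⟩ | ⟨q, rfl⟩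
    · obtain ⟨B₂, hg, hz⟩ := ih₂.1 z
      obtain ⟨B, hgB, hmem⟩ := W.transfer2 B₂ hg hz
      have hA : f₁ a ∉ B := fun hv => by
        obtain ⟨u, _, he⟩ := hmem _ hv
        exact W.ne12 a u he.symm
      have hC : f₁ b ∉ B := fun hv => by
        obtain ⟨u, _, he⟩ := hmem _ hv
        exact W.ne12 b u he.symm
      exact ⟨B, hgB.xyGem hA hC⟩
    · have haxy : a = x ∨ a = y := by
        by_contra hne
        push_neg at hne
        exact W.adj12 hne.1 hne.2 q hAC
      obtain ⟨B₁, hg⟩ := ih₁.2.1 x y W.hxy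
      obtain ⟨B, hgB, hmem⟩ := W.transfer1 B₁ hg
      have hC : f₂ q ∉ B := fun hv => by
        obtain ⟨a', _, he⟩ := hmem _ hv
        exact W.ne12 a' q he
      refine ⟨B, hgB.weaken ?_ (Or.inr (Or.inr hC))⟩
      rcases haxy with rfl | rfl
      · exact Or.inl rfl
      · exact Or.inr (Or.inl rfl)
    · have hbxy : b = x ∨ b = y := by
        by_contra hne
        push_neg at hne
        exact W.adj12 hne.1 hne.2 p hAC.symm
      obtain ⟨B₁, hg⟩ := ih₁.2.1 x y W.hxy
      obtain ⟨B, hgB, hmem⟩ := W.transfer1 B₁ hg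
      have hA : f₂ p ∉ B := fun hv => by
        obtain ⟨a', _, he⟩ := hmem _ hv
        exact W.ne12 a' p he
      refine ⟨B, hgB.weaken (Or.inr (Or.inr hA)) ?_⟩
      rcases hbxy with rfl | rfl
      · exact Or.inl rfl
      · exact Or.inr (Or.inl rfl)
    · obtain ⟨B₁, hg⟩ := ih₁.2.1 x y W.hxy
      obtain ⟨B, hgB, hmem⟩ := W.transfer1 B₁ hg
      have hA : f₂ p ∉ B := fun hv => by
        obtain ⟨a', _, he⟩ := hmem _ hv
        exact W.ne12 a' p he
      have hC : f₂ q ∉ B := fun hv => by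
        obtain ⟨a', _, he⟩ := hmem _ hv
        exact W.ne12 a' q he
      exact ⟨B, hgB.weaken (Or.inr (Or.inr hA)) (Or.inr (Or.inr hC))⟩
  · intro _ T hT4 hTcl
    by_cases hf2 : ∃ t ∈ T, ∃ u : {w : V₂ // w ≠ z}, f₂ u = t
    · by_cases hf1 : ∃ t ∈ T, ∃ a : V₁, f₁ a = t
      · obtain ⟨t₂, ht₂, u', rfl⟩ := hf2
        obtain ⟨t₁, ht₁, a, rfl⟩ := hf1
        have hmixgen : ∀ b : V₁, f₁ b ∈ T → b = x ∨ b = y := by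
          intro b hb
          by_contra hne
          push_neg at hne
          exact W.adj12 hne.1 hne.2 u' (hTcl _ hb _ ht₂ (W.ne12 b u'))
        have hnotboth : ¬ (f₁ x ∈ T ∧ f₁ y ∈ T) := by
          rintro ⟨hx', hy'⟩
          exact W.not_adj_xy (hTcl _ hx' _ hy'
            (fun h => W.hxy.ne (f₁.injective h)))
        rcases hmixgen a ht₁ with rfl | rfl
        · refine W.mixed ih₁.1 ih₂.2.2 T hT4 hTcl ht₁ ?_
          intro t ht
          rcases W.mem_cases t with ⟨b, rfl⟩ | hf
          · rcases hmixgen b ht with rfl | rfl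
            · exact Or.inl rfl
            · exact absurd ⟨ht₁, ht⟩ hnotboth
          · exact Or.inr hf
        · have W' := W.swap
          refine W'.mixed ih₁.1 ih₂.2.2 T hT4 hTcl ht₁ ?_
          intro t ht
          rcases W.mem_cases t with ⟨b, rfl⟩ | hf
          · rcases hmixgen b ht with rfl | rfl
            · exact absurd ⟨ht, ht₁⟩ hnotboth
            · exact Or.inl rfl
          · exact Or.inr hf
      · push_neg at hf1
        obtain ⟨B₁, hg⟩ := ih₁.2.1 x y W.hxy
        obtain ⟨B, hgB, hmem⟩ := W.transfer1 B₁ hg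
        refine ⟨B, hgB.gem, Set.disjoint_left.mpr fun t htB htT => ?_⟩
        obtain ⟨a, _, rfl⟩ := hmem _ htB
        exact hf1 _ htT a rfl
    · push_neg at hf2
      obtain ⟨B₂, hg, hz⟩ := ih₂.1 z
      obtain ⟨B, hgB, hmem⟩ := W.transfer2 B₂ hg hz
      refine ⟨B, hgB, Set.disjoint_left.mpr fun t htB htT => ?_⟩
      obtain ⟨u, _, rfl⟩ := hmem _ htB
      exact hf2 _ htT u rfl

theorem psi_of_is5Ore : ∀ {V : Type} {G : SimpleGraph V}, Is5Ore G → Psi G := by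
  intro V G h
  induction h with
  | k5 h => exact psi_k5 h
  | ore h₁ h₂ hcomp ih₁ ih₂ => exact psi_step hcomp ih₁ ih₂

end Comp

/-- Let `H` be 5-Ore. For any vertex `v`, there is a diamond or emerald of `H` disjoint from
`v`. Moreover, if `H ≠ K₅`, then for any subgraph `T` of `H` isomorphic to `K₄` there is a
diamond or emerald of `H` disjoint from `T`. -/
theorem stmt_7 {V : Type} [Fintype V] (H : SimpleGraph V) (h5 : Is5Ore H) :
    (∀ v : V, (∃ D : Set V, IsDiamond H D ∧ v ∉ D) ∨
      (∃ S : Set V, IsEmerald H S ∧ v ∉ S)) ∧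
    (¬ IsK5 H → ∀ T : Set V, T.ncard = 4 → (∀ a ∈ T, ∀ b ∈ T, a ≠ b → H.Adj a b) →
      (∃ D : Set V, IsDiamond H D ∧ Disjoint D T) ∨
      (∃ S : Set V, IsEmerald H S ∧ Disjoint S T)) := by
  have hPsi := psi_of_is5Ore h5
  constructor
  · intro v
    obtain ⟨B, hg, hv⟩ := hPsi.1 v
    rcases hg with hd | he
    · exact Or.inl ⟨B, hd, hv⟩
    · exact Or.inr ⟨B, he, hv⟩
  · intro hk T hT4 hTcl
    obtain ⟨B, hg, hdisj⟩ := hPsi.2.2 hk T hT4 hTcl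
    rcases hg with hd | he
    · exact Or.inl ⟨B, hd, hdisj⟩
    · exact Or.inr ⟨B, he, hdisj⟩

end Postle
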